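/- Let f : Σ_N → Σ_N be a shift-commuting map that is additive (f(x + y) = f(x) + f(y), where addition on Σ_N = ℤ → ZMod N is coordinatewise) and whose kernel {x : f(x) = 0} is finite, say of cardinality M. Then for every prime p > max(M, N), the number of points x with σ^p(x) = x that are periodic under f is at least N^{p-1}. -/

import Mathlib

/-- The shift map on the full shift `ℤ → A`. -/
def shift {A : Type*} (x : ℤ → A) : ℤ → A := fun i => x (i + 1)

lemma shift_iterate {A : Type*} (x : ℤ → A) (k : ℕ) (i : ℤ) :
    shift^[k] x i = x (i + k) := by
  induction k generalizing i with
  | zero => simp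
  | succ n ih =>
    rw [Function.iterate_succ_apply']
    show shift^[n] x (i + 1) = x (i + (n + 1 : ℕ))
    rw [ih]
    congr 1
    push_cast
    ring

theorem stmt7 {N : ℕ} (f : (ℤ → ZMod N) → (ℤ → ZMod N))
    (hcomm : ∀ x, f (shift x) = shift (f x))
    (hadd : ∀ x y, f (x + y) = f x + f y)
    (M : ℕ) (hfin : ({x : ℤ → ZMod N | f x = 0}).Finite)
    (hM : ({x : ℤ → ZMod N | f x = 0}).ncard = M)
    (p : ℕ) (hp : p.Prime) (hpM : max M N < p) :
    N ^ (p - 1) ≤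
      ({x : ℤ → ZMod N | shift^[p] x = x ∧ ∃ q, 1 ≤ q ∧ f^[q] x = x}).ncard := by
  classical
  rcases Nat.eq_zero_or_pos N with hN0 | hN
  · subst hN0
    have h2 := hp.two_le
    rw [Nat.zero_pow (by omega)]
    exact Nat.zero_le _
  haveI : NeZero N := ⟨hN.ne'⟩
  haveI : NeZero p := ⟨hp.pos.ne'⟩
  have hMp : M < p := lt_of_le_of_lt (le_max_left _ _) hpM
  have hNp' : N < p := lt_of_le_of_lt (le_max_right _ _) hpM
  -- basic additive facts
  have hf0 : f 0 = 0 := by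
    have h := hadd 0 0
    rw [add_zero] at h
    exact (left_eq_add.mp h)
  have hsub : ∀ x y, f (x - y) = f x - f y := by
    intro x y
    have h := hadd (x - y) y
    rw [sub_add_cancel] at h
    exact eq_sub_of_add_eq h.symm
  have hcommIter : ∀ (k : ℕ) (x), f (shift^[k] x) = shift^[k] (f x) := by
    intro k
    induction k with
    | zero => intro x; simp
    | succ n ih =>
      intro x
      rw [Function.iterate_succ_apply, ih, hcomm, ← Function.iterate_succ_apply]
  have hsz : ∀ (j : ℕ), shift^[j] (0 : ℤ → ZMod N) = 0 := by
    intro j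
    funext i
    rw [shift_iterate]
    rfl
  have hfiter_sub : ∀ (k : ℕ) (x y), f^[k] (x - y) = f^[k] x - f^[k] y := by
    intro k
    induction k with
    | zero => intro x y; simp
    | succ n ih =>
      intro x y
      rw [Function.iterate_succ_apply, Function.iterate_succ_apply,
        Function.iterate_succ_apply, hsub, ih]
  -- constants
  have hconst_of : ∀ x : ℤ → ZMod N, shift x = x → ∀ i : ℤ, x i = x 0 := by
    intro x hx
    have step : ∀ i : ℤ, x (i + 1) = x i := fun i => congrFun hx i
    intro i
    induction i using Int.induction_on with
    | zero => rfl
    | succ k ih => rw [step, ih]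
    | pred k ih =>
      have h := step (-(k : ℤ) - 1)
      have h2 : -(k : ℤ) - 1 + 1 = -(k : ℤ) := by ring
      rw [h2] at h
      rw [← h]
      exact ih
  -- periodicity of members of G
  have hGstep : ∀ x : ℤ → ZMod N, shift^[p] x = x → ∀ i : ℤ, x (i + p) = x i := by
    intro x hx i
    have := congrFun hx i
    rwa [shift_iterate] at this
  have hGsub : ∀ u v : ℤ → ZMod N, shift^[p] u = u → shift^[p] v = v →
      shift^[p] (u - v) = u - v := by
    intro u v hu hv
    funext i
    rw [shift_iterate]
    show u (i + p) - v (i + p) = u i - v i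
    rw [hGstep u hu i, hGstep v hv i]
  have hmapsf : ∀ x : ℤ → ZMod N, shift^[p] x = x → shift^[p] (f x) = f x := by
    intro x hx
    rw [← hcommIter, hx]
  -- Key lemma A: nonconstant points of G map to nonconstant points
  have keyA : ∀ x : ℤ → ZMod N, shift^[p] x = x → shift x ≠ x → shift (f x) ≠ f x := by
    intro x hxG hxne hfx
    set d := shift x - x with hd
    have hfd : f d = 0 := by rw [hd, hsub, hcomm, hfx, sub_self]
    by_cases hdd : shift d = d
    · -- constant difference case
      set c := d 0 with hc
      have hstep : ∀ i : ℤ, x (i + 1) = x i + c := by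
        intro i
        have h1 : d i = c := hconst_of d hdd i
        have h2 : x (i + 1) - x i = c := h1
        rw [sub_eq_iff_eq_add] at h2
        rw [h2, add_comm]
      have hmul : ∀ (k : ℕ) (i : ℤ), x (i + k) = x i + k • c := by
        intro k
        induction k with
        | zero => intro i; simp
        | succ n ih =>
          intro i
          have h1 : (i + ((n : ℕ) + 1 : ℕ) : ℤ) = (i + n) + 1 := by push_cast; ring
          rw [h1, hstep, ih, succ_nsmul, add_assoc]
      have hpc : (p : ℕ) • c = 0 := by
        have h1 := hmul p 0
        rw [hGstep x hxG 0] at h1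
        exact (left_eq_add.mp h1)
      have hc0 : c = 0 := by
        have hcop : Nat.Coprime p N :=
          (Nat.Prime.coprime_iff_not_dvd hp).mpr
            (fun hdvd => absurd (Nat.le_of_dvd hN hdvd) (by omega))
        have hm : ((p : ℕ) : ZMod N) * c = 0 := by rw [← nsmul_eq_mul]; exact hpc
        have hu : IsUnit ((p : ℕ) : ZMod N) :=
          ⟨ZMod.unitOfCoprime p hcop, ZMod.coe_unitOfCoprime p hcop⟩
        exact (hu.mul_right_eq_zero).mp hm
      apply hxne
      funext i
      have h1 : d i = 0 := by rw [hconst_of d hdd i, ← hc, hc0]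
      exact sub_eq_zero.mp h1
    · -- orbit case: p distinct elements in the kernel of f
      have hsxG : shift^[p] (shift x) = shift x := by
        rw [← Function.iterate_succ_apply, Function.iterate_succ_apply', hxG]
      have hdG : shift^[p] d = d := hGsub _ _ hsxG hxG
      have hmp : Function.minimalPeriod shift d = p := by
        have hper : Function.IsPeriodicPt shift p d := hdG
        rcases hp.eq_one_or_self_of_dvd _ hper.minimalPeriod_dvd with h1 | h1
        · exfalso
          apply hdd
          have h2 := Function.iterate_minimalPeriod (f := shift) (x := d)
          rw [h1] at h2
          simpa using h2
        · exact h1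
      have hker : ∀ j : ℕ, f (shift^[j] d) = 0 := by
        intro j
        rw [hcommIter, hfd, hsz]
      have hinj : Set.InjOn (fun j : ℕ => shift^[j] d) (Set.Iio p) := by
        have h := Function.iterate_injOn_Iio_minimalPeriod (f := shift) (x := d)
        rwa [hmp] at h
      have hcard : p ≤ M := by
        rw [← hM, Set.ncard_eq_toFinset_card _ hfin]
        calc p = (Finset.Iio p).card := (Nat.card_Iio p).symm
          _ ≤ hfin.toFinset.card := by
              apply Finset.card_le_card_of_injOn (fun j : ℕ => shift^[j] d)
              · intro j _
                rw [Finset.mem_coe, Set.Finite.mem_toFinset]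
                exact hker j
              · rw [Finset.coe_Iio]
                exact hinj
      omega
  -- Key lemma B: kernel of every iterate inside G consists of constants
  have keyB : ∀ (k : ℕ) (x : ℤ → ZMod N), shift^[p] x = x → f^[k] x = 0 →
      shift x = x := by
    intro k
    induction k with
    | zero =>
      intro x _ h0
      rw [Function.iterate_zero_apply] at h0
      rw [h0]
      rfl
    | succ n ih =>
      intro x hxG h0
      by_contra hne
      have h1 : shift^[p] (f x) = f x := hmapsf x hxG
      have h2 : f^[n] (f x) = 0 := by
        rw [← Function.iterate_succ_apply]
        exact h0
      exact keyA x hxG hne (ih (f x) h1 h2)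
  -- The set G of σᵖ-fixed points, as the range of an explicit map
  set G : Set (ℤ → ZMod N) := {x | shift^[p] x = x} with hGdef
  have hshiftmul : ∀ x : ℤ → ZMod N, x ∈ G → ∀ (m : ℤ) (i : ℤ),
      x (i + p * m) = x i := by
    intro x hx m
    induction m using Int.induction_on with
    | zero => intro i; simp
    | succ k ih =>
      intro i
      have h1 : i + (p : ℤ) * ((k : ℤ) + 1) = (i + p * k) + p := by ring
      rw [h1, hGstep x hx, ih]
    | pred k ih =>
      intro i
      have h1 := hGstep x hx (i + (p : ℤ) * (-(k : ℤ) - 1))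
      have h2 : i + (p : ℤ) * (-(k : ℤ) - 1) + p = i + p * (-(k : ℤ)) := by ring
      rw [h2] at h1
      rw [← h1]
      exact ih i
  have hmod_eq : ∀ x : ℤ → ZMod N, x ∈ G → ∀ i j : ℤ, i % p = j % p → x i = x j := by
    intro x hx i j hij
    have hi : x i = x (i % p) := by
      have h := hshiftmul x hx (i / p) (i % p)
      rw [show i % (p : ℤ) + (p : ℤ) * (i / p) = i from Int.emod_add_mul_ediv i p] at h
      exact h
    have hj : x j = x (j % p) := by
      have h := hshiftmul x hx (j / p) (j % p)
      rw [show j % (p : ℤ) + (p : ℤ) * (j / p) = j from Int.emod_add_mul_ediv j p] at h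
      exact h
    rw [hi, hj, hij]
  set Φ : (ZMod p → ZMod N) → (ℤ → ZMod N) := fun v => fun i => v (i : ZMod p) with hΦ
  have hΦmem : ∀ v, Φ v ∈ G := by
    intro v
    show shift^[p] (Φ v) = Φ v
    funext i
    rw [shift_iterate]
    show v ((i + (p : ℕ) : ℤ) : ZMod p) = v (i : ZMod p)
    congr 1
    push_cast
    simp [ZMod.natCast_self]
  have hΦsurj : ∀ x ∈ G, ∃ v, Φ v = x := by
    intro x hx
    refine ⟨fun a => x ((a.val : ℤ)), ?_⟩
    funext i
    show x (((ZMod.val ((i : ℤ) : ZMod p) : ℕ) : ℤ)) = x i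
    apply hmod_eq x hx
    rw [ZMod.val_intCast]
    exact Int.emod_emod_of_dvd i dvd_rfl
  have hGrange : G = Set.range Φ := by
    ext x
    constructor
    · intro hx
      rcases hΦsurj x hx with ⟨v, hv⟩
      exact ⟨v, hv⟩
    · rintro ⟨v, rfl⟩
      exact hΦmem v
  have hΦinj : Function.Injective Φ := by
    intro v w h
    funext a
    have h1 := congrFun h ((a.val : ℤ))
    show v a = w a
    have h2 : (((a.val : ℤ)) : ZMod p) = a := by
      push_cast
      exact ZMod.natCast_rightInverse a
    rwa [show (Φ v) ((a.val : ℤ)) = v (((a.val : ℤ)) : ZMod p) from rfl,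
      show (Φ w) ((a.val : ℤ)) = w (((a.val : ℤ)) : ZMod p) from rfl, h2] at h1
  have hGfin : G.Finite := by
    rw [hGrange]
    exact Set.finite_range Φ
  haveI hGfint : Fintype ↥G := hGfin.fintype
  -- cardinality of G is at least N ^ p
  have hcardG : N ^ p ≤ Fintype.card ↥G := by
    have hinj2 : Function.Injective (fun v : ZMod p → ZMod N => (⟨Φ v, hΦmem v⟩ : ↥G)) := by
      intro v w h
      exact hΦinj (congrArg Subtype.val h)
    calc N ^ p = Fintype.card (ZMod p → ZMod N) := by
          rw [Fintype.card_fun, ZMod.card, ZMod.card]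
      _ ≤ Fintype.card ↥G := Fintype.card_le_of_injective _ hinj2
  -- the restricted map F on G
  set F : ↥G → ↥G := fun x => ⟨f x.val, hmapsf x.val x.2⟩ with hF
  have hFcoe : ∀ (k : ℕ) (x : ↥G), ((F^[k] x : ↥G) : ℤ → ZMod N) = f^[k] (x : ℤ → ZMod N) := by
    intro k
    induction k with
    | zero => intro x; simp
    | succ n ih =>
      intro x
      rw [Function.iterate_succ_apply', Function.iterate_succ_apply']
      show f ((F^[n] x : ↥G) : ℤ → ZMod N) = _
      rw [ih]
  -- pigeonhole: two iterates of F coincide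
  obtain ⟨a, b, hab, hFab⟩ : ∃ a b : ℕ, a < b ∧ F^[a] = F^[b] := by
    obtain ⟨a, b, hne, heq⟩ := Finite.exists_ne_map_eq_of_infinite (fun k : ℕ => F^[k])
    rcases lt_or_gt_of_ne hne with h | h
    · exact ⟨a, b, h, heq⟩
    · exact ⟨b, a, h, heq.symm⟩
  -- fibers of F^[a] have at most N elements
  have hfiber : ∀ z ∈ Finset.univ.image F^[a],
      (Finset.univ.filter (fun x => F^[a] x = z)).card ≤ N := by
    intro z _
    calc (Finset.univ.filter (fun x => F^[a] x = z)).card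
        ≤ (Finset.univ : Finset (ZMod N)).card := by
          apply Finset.card_le_card_of_injOn (fun x : ↥G => (x : ℤ → ZMod N) 0)
          · intro _ _; exact Finset.mem_univ _
          · intro u hu v hv huv
            simp only [Finset.coe_filter, Set.mem_setOf_eq, Finset.mem_univ, true_and] at hu hv
            have hker : f^[a] ((u : ℤ → ZMod N) - (v : ℤ → ZMod N)) = 0 := by
              rw [hfiter_sub]
              have h1 : f^[a] (u : ℤ → ZMod N) = ((F^[a] u : ↥G) : ℤ → ZMod N) :=
                (hFcoe a u).symm
              have h2 : f^[a] (v : ℤ → ZMod N) = ((F^[a] v : ↥G) : ℤ → ZMod N) :=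
                (hFcoe a v).symm
              rw [h1, h2, hu, hv, sub_self]
            have hsubG : shift^[p] ((u : ℤ → ZMod N) - (v : ℤ → ZMod N)) =
                (u : ℤ → ZMod N) - (v : ℤ → ZMod N) := hGsub _ _ u.2 v.2
            have hcst := keyB a _ hsubG hker
            have hzero : ∀ i : ℤ, (u : ℤ → ZMod N) i - (v : ℤ → ZMod N) i = 0 := by
              intro i
              have h3 := hconst_of _ hcst i
              have huv' : (u : ℤ → ZMod N) 0 = (v : ℤ → ZMod N) 0 := huv
              have h4 : ((u : ℤ → ZMod N) - (v : ℤ → ZMod N)) 0 = 0 := by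
                show (u : ℤ → ZMod N) 0 - (v : ℤ → ZMod N) 0 = 0
                rw [huv', sub_self]
              calc (u : ℤ → ZMod N) i - (v : ℤ → ZMod N) i
                  = ((u : ℤ → ZMod N) - (v : ℤ → ZMod N)) i := rfl
                _ = ((u : ℤ → ZMod N) - (v : ℤ → ZMod N)) 0 := h3
                _ = 0 := h4
            apply Subtype.ext
            funext i
            exact sub_eq_zero.mp (hzero i)
      _ = N := by rw [Finset.card_univ, ZMod.card]
  have hmain : Fintype.card ↥G ≤ N * (Finset.univ.image F^[a]).card := by
    have h := Finset.card_le_mul_card_image (Finset.univ : Finset ↥G) N hfiber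
    rwa [Finset.card_univ] at h
  have him : N ^ (p - 1) ≤ (Finset.univ.image F^[a]).card := by
    have hsplit : N ^ p = N * N ^ (p - 1) := by
      rw [← pow_succ']
      congr 1
      have := hp.pos
      omega
    have h1 : N * N ^ (p - 1) ≤ N * (Finset.univ.image F^[a]).card := by
      rw [← hsplit]
      exact le_trans hcardG hmain
    exact Nat.le_of_mul_le_mul_left h1 hN
  -- transfer to the statement set
  set S : Set (ℤ → ZMod N) :=
    {x : ℤ → ZMod N | shift^[p] x = x ∧ ∃ q, 1 ≤ q ∧ f^[q] x = x} with hS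
  set T : Set (ℤ → ZMod N) := Subtype.val '' Set.range F^[a] with hT
  have hTS : T ⊆ S := by
    rintro _ ⟨y, ⟨x, rfl⟩, rfl⟩
    refine ⟨(F^[a] x).2, b - a, by omega, ?_⟩
    have hstep : F^[b - a] (F^[a] x) = F^[a] x := by
      rw [← Function.iterate_add_apply, show b - a + a = b by omega, ← hFab]
    calc f^[b - a] ((F^[a] x : ↥G) : ℤ → ZMod N)
        = ((F^[b - a] (F^[a] x) : ↥G) : ℤ → ZMod N) := (hFcoe _ _).symm
      _ = ((F^[a] x : ↥G) : ℤ → ZMod N) := by rw [hstep]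
  have hSfin : S.Finite := hGfin.subset (fun x hx => hx.1)
  have hTcard : N ^ (p - 1) ≤ T.ncard := by
    rw [hT, Set.ncard_image_of_injective _ Subtype.val_injective]
    have hre : Set.range F^[a] = ↑(Finset.univ.image F^[a]) := by
      rw [Finset.coe_image, Finset.coe_univ, Set.image_univ]
    rw [hre, Set.ncard_coe_finset]
    exact him
  exact le_trans hTcard (Set.ncard_le_ncard hTS hSfin)
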